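/- arXiv:1407.8353 — 2 statements merged into one kernel-verified Lean document; each statement's English description precedes it below -/
import Mathlib

section
/- (Continuous-time Doob theorem.) Let (P_t)_{t ≥ 0} be a family of Markov kernels on (E, 𝓔) satisfying the semigroup property P_{s+t}(x, A) = ∫_E P_t(y, A) P_s(x, dy) for all s, t ≥ 0, with P_0(x, ·) = δ_x (no regularity in t is required). Assume that for each pair x, y ∈ E there exists t = t_{x,y} > 0 such that P_t(x,·) and P_t(y,·) are mutually absolutely continuous (equivalent). Then there is at most one probability measure μ with μ(A) = ∫_E P_t(x, A) μ(dx) for all t ≥ 0 and A ∈ 𝓔, and if such a μ exists, then for every x ∈ E, ‖P_t(x,·) − μ‖ → 0 as t → ∞. -/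
open MeasureTheory ProbabilityTheory Filter ENNReal NNReal Set

set_option linter.unusedSectionVars false

namespace DoobAux

variable {E : Type*} [MeasurableSpace E]

/-- Half the total variation distance, as a supremum over measurable sets. -/
noncomputable def dTV (μ ν : Measure E) : ℝ≥0∞ :=
  ⨆ (A : Set E) (_ : MeasurableSet A), ((μ A - ν A) ⊔ (ν A - μ A))

lemma sub_le_dTV {μ ν : Measure E} {A : Set E} (hA : MeasurableSet A) :
    μ A - ν A ≤ dTV μ ν :=
  le_trans le_sup_left (le_iSup₂_of_le A hA le_rfl)

lemma apply_le_add_dTV {μ ν : Measure E} {A : Set E} (hA : MeasurableSet A) :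
    μ A ≤ ν A + dTV μ ν := by
  have := sub_le_dTV (μ := μ) (ν := ν) hA
  rwa [tsub_le_iff_left] at this

lemma dTV_le {μ ν : Measure E} {r : ℝ≥0∞}
    (h : ∀ A : Set E, MeasurableSet A → (μ A - ν A ≤ r ∧ ν A - μ A ≤ r)) :
    dTV μ ν ≤ r :=
  iSup₂_le fun A hA => sup_le (h A hA).1 (h A hA).2

lemma dTV_symm (μ ν : Measure E) : dTV μ ν = dTV ν μ := by
  unfold dTV
  congr 1; ext A; congr 1; ext hA; exact sup_comm _ _

lemma dTV_self (μ : Measure E) : dTV μ μ = 0 :=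
  le_antisymm (dTV_le fun A _ => by simp) zero_le

lemma dTV_le_one (μ ν : Measure E) [IsProbabilityMeasure μ] [IsProbabilityMeasure ν] :
    dTV μ ν ≤ 1 := by
  refine dTV_le fun A _ => ⟨?_, ?_⟩
  · exact le_trans (tsub_le_self.trans (measure_mono (subset_univ A))) (le_of_eq measure_univ)
  · exact le_trans (tsub_le_self.trans (measure_mono (subset_univ A))) (le_of_eq measure_univ)

lemma eq_of_dTV_eq_zero {μ ν : Measure E} (h : dTV μ ν = 0) : μ = ν := by
  ext A hA
  have h1 : μ A - ν A = 0 :=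
    le_antisymm (le_trans (sub_le_dTV hA) h.le) zero_le
  have h2 : ν A - μ A = 0 :=
    le_antisymm (le_trans (le_trans le_sup_right (le_iSup₂_of_le A hA le_rfl)) h.le) zero_le
  exact le_antisymm (tsub_eq_zero_iff_le.mp h1) (tsub_eq_zero_iff_le.mp h2)

lemma dTV_triangle (μ ν ξ : Measure E) : dTV μ ξ ≤ dTV μ ν + dTV ν ξ := by
  refine dTV_le fun A hA => ⟨?_, ?_⟩
  · rw [tsub_le_iff_left]
    calc μ A ≤ ν A + dTV μ ν := apply_le_add_dTV hA
      _ ≤ (ξ A + dTV ν ξ) + dTV μ ν := add_le_add_left (apply_le_add_dTV hA) _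
      _ = ξ A + (dTV μ ν + dTV ν ξ) := by ring
  · rw [tsub_le_iff_left]
    calc ξ A ≤ ν A + dTV ξ ν := apply_le_add_dTV hA
      _ ≤ (μ A + dTV ν μ) + dTV ξ ν := add_le_add_left (apply_le_add_dTV hA) _
      _ = μ A + (dTV μ ν + dTV ν ξ) := by rw [dTV_symm ν μ, dTV_symm ξ ν]; ring

/-- Layer-cake comparison: for `0 ≤ f ≤ 1`,
`∫ f dμ ≤ ∫ f dν + dTV μ ν`. -/
lemma lintegral_le_add_dTV {μ ν : Measure E} {f : E → ℝ≥0∞}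
    (hf : Measurable f) (hf1 : ∀ x, f x ≤ 1) :
    ∫⁻ x, f x ∂μ ≤ ∫⁻ x, f x ∂ν + dTV μ ν := by
  set g : E → ℝ := fun x => (f x).toReal with hg
  have hg_meas : Measurable g := hf.ennreal_toReal
  have hfg : ∀ x, f x = ENNReal.ofReal (g x) := fun x =>
    (ENNReal.ofReal_toReal (lt_of_le_of_lt (hf1 x) one_lt_top).ne).symm
  have hg_nn : ∀ x, 0 ≤ g x := fun x => ENNReal.toReal_nonneg
  have hg_le1 : ∀ x, g x ≤ 1 := fun x => by
    rw [hg]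
    simpa using ENNReal.toReal_mono one_ne_top (hf1 x)
  have key : ∀ (m : Measure E), ∫⁻ x, f x ∂m = ∫⁻ t in Ioi (0:ℝ), m {a | t < g a} := by
    intro m
    rw [show (fun x => f x) = fun x => ENNReal.ofReal (g x) from funext hfg]
    exact lintegral_eq_lintegral_meas_lt m (Filter.Eventually.of_forall hg_nn)
      hg_meas.aemeasurable
  rw [key μ, key ν]
  have hbound : ∀ t ∈ Ioi (0:ℝ), μ {a | t < g a} ≤
      ν {a | t < g a} + (Iio (1:ℝ)).indicator (fun _ => dTV μ ν) t := by
    intro t _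
    by_cases ht : t < 1
    · rw [Set.indicator_of_mem (mem_Iio.mpr ht)]
      exact apply_le_add_dTV (measurableSet_lt measurable_const hg_meas)
    · have : {a | t < g a} = (∅ : Set E) := by
        ext a; simp only [mem_setOf_eq, mem_empty_iff_false, iff_false, not_lt]
        exact (hg_le1 a).trans (not_lt.mp ht)
      rw [this]; simp
  have hν_meas : Measurable fun t : ℝ => ν {a | t < g a} := by
    apply Antitone.measurable
    intro t s hts
    exact measure_mono fun a ha => lt_of_le_of_lt hts ha
  have hind_meas : Measurable fun t : ℝ => (Iio (1:ℝ)).indicator (fun _ => dTV μ ν) t :=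
    (measurable_const.indicator measurableSet_Iio)
  calc ∫⁻ t in Ioi (0:ℝ), μ {a | t < g a}
      ≤ ∫⁻ t in Ioi (0:ℝ), (ν {a | t < g a} + (Iio (1:ℝ)).indicator (fun _ => dTV μ ν) t) :=
        setLIntegral_mono (hν_meas.add hind_meas) hbound
    _ = (∫⁻ t in Ioi (0:ℝ), ν {a | t < g a}) +
        ∫⁻ t in Ioi (0:ℝ), (Iio (1:ℝ)).indicator (fun _ => dTV μ ν) t :=
        lintegral_add_left hν_meas _
    _ ≤ (∫⁻ t in Ioi (0:ℝ), ν {a | t < g a}) + dTV μ ν := by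
        apply add_le_add_right
        rw [lintegral_indicator measurableSet_Iio, Measure.restrict_restrict measurableSet_Iio,
          setLIntegral_const]
        rw [show Iio (1:ℝ) ∩ Ioi 0 = Ioo (0:ℝ) 1 by ext t; simp [mem_Ioo, and_comm]]
        rw [Real.volume_Ioo]
        simp


lemma sub_le_compl_sub_aux {m₁ m₂ : Measure E} {A : Set E}
    (h1 : m₁ A + m₁ Aᶜ = m₂ A + m₂ Aᶜ) (hb' : m₂ Aᶜ ≠ ∞) :
    m₂ A - m₁ A ≤ m₁ Aᶜ - m₂ Aᶜ := by
  rw [tsub_le_iff_left]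
  refine (ENNReal.add_le_add_iff_right hb').mp ?_
  calc m₂ A + m₂ Aᶜ = m₁ A + m₁ Aᶜ := h1.symm
    _ ≤ m₁ A + ((m₁ Aᶜ - m₂ Aᶜ) + m₂ Aᶜ) := add_le_add_right le_tsub_add _
    _ = m₁ A + (m₁ Aᶜ - m₂ Aᶜ) + m₂ Aᶜ := by rw [add_assoc]

/-- For finite measures of equal total mass,
`m₂ A - m₁ A = m₁ Aᶜ - m₂ Aᶜ`. -/
lemma sub_eq_compl_sub {m₁ m₂ : Measure E} (hmass : m₁ univ = m₂ univ)
    (hfin : m₁ univ ≠ ∞) {A : Set E} (hA : MeasurableSet A) :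
    m₂ A - m₁ A = m₁ Aᶜ - m₂ Aᶜ := by
  have h1 : m₁ A + m₁ Aᶜ = m₂ A + m₂ Aᶜ := by
    rw [measure_add_measure_compl hA, measure_add_measure_compl hA, hmass]
  have hfin2 : m₂ univ ≠ ∞ := hmass ▸ hfin
  have hb' : m₂ Aᶜ ≠ ∞ := (lt_of_le_of_lt (measure_mono (subset_univ _)) hfin2.lt_top).ne
  have ha' : m₁ A ≠ ∞ := (lt_of_le_of_lt (measure_mono (subset_univ _)) hfin.lt_top).ne
  refine le_antisymm (sub_le_compl_sub_aux h1 hb') ?_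
  have h2 : m₂ Aᶜ + m₂ Aᶜᶜ = m₁ Aᶜ + m₁ Aᶜᶜ := by
    rw [compl_compl]
    rw [add_comm (m₂ Aᶜ), add_comm (m₁ Aᶜ)]
    exact h1.symm
  have := sub_le_compl_sub_aux (m₁ := m₂) (m₂ := m₁) (A := Aᶜ) h2 (by rwa [compl_compl])
  rwa [compl_compl] at this

/-- Data processing: applying a Markov kernel does not increase total variation. -/
lemma dTV_bind_le {μ ν : Measure E} (κ : Kernel E E) [IsMarkovKernel κ]
    (_hμ : IsProbabilityMeasure μ) (_hν : IsProbabilityMeasure ν) :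
    dTV (μ.bind κ) (ν.bind κ) ≤ dTV μ ν := by
  have hb : ∀ (m : Measure E) (A : Set E), MeasurableSet A →
      (m.bind κ) A = ∫⁻ x, κ x A ∂m := fun m A hA =>
    Measure.bind_apply hA (Kernel.measurable κ).aemeasurable
  refine dTV_le fun A hA => ⟨?_, ?_⟩
  · rw [tsub_le_iff_left, hb μ A hA, hb ν A hA]
    exact lintegral_le_add_dTV (Kernel.measurable_coe κ hA) fun x => prob_le_one
  · rw [tsub_le_iff_left, hb μ A hA, hb ν A hA, dTV_symm μ ν]
    exact lintegral_le_add_dTV (Kernel.measurable_coe κ hA) fun x => prob_le_one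

/-- Mixture bound: `dTV (αK, βK) ≤ (∫∫ dTV (K u, K v) dα dβ) / mass`,
for finite measures `α`, `β` of the same mass. -/
lemma dTV_bind_le_lintegral (κ : Kernel E E) [IsMarkovKernel κ]
    {α β : Measure E} [IsFiniteMeasure α] [IsFiniteMeasure β] {cm : ℝ≥0∞}
    (hα : α univ = cm) (hβ : β univ = cm) (h0 : cm ≠ 0) (htop : cm ≠ ∞)
    (hD : Measurable fun p : E × E => dTV (κ p.1) (κ p.2)) :
    dTV (α.bind κ) (β.bind κ) ≤ (∫⁻ p, dTV (κ p.1) (κ p.2) ∂(α.prod β)) / cm := by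
  have hb : ∀ (m : Measure E) (A : Set E), MeasurableSet A →
      (m.bind κ) A = ∫⁻ x, κ x A ∂m := fun m A hA =>
    Measure.bind_apply hA (Kernel.measurable κ).aemeasurable
  set I : ℝ≥0∞ := ∫⁻ p, dTV (κ p.1) (κ p.2) ∂(α.prod β) with hI
  have key : ∀ A : Set E, MeasurableSet A →
      (α.bind κ) A * cm ≤ (β.bind κ) A * cm + I := by
    intro A hA
    have hκA : Measurable fun x => κ x A := Kernel.measurable_coe κ hA
    have step1 : (α.bind κ) A * cm = ∫⁻ u, ∫⁻ v, κ u A ∂β ∂α := by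
      rw [hb α A hA, ← lintegral_mul_const _ hκA]
      congr 1; ext u; rw [lintegral_const, hβ]
    have step2 : ∫⁻ u, ∫⁻ v, κ u A ∂β ∂α ≤
        ∫⁻ u, ∫⁻ v, (κ v A + dTV (κ u) (κ v)) ∂β ∂α := by
      refine lintegral_mono fun u => lintegral_mono fun v => ?_
      have := sub_le_dTV (μ := κ u) (ν := κ v) hA
      rwa [tsub_le_iff_left] at this
    have step3 : ∫⁻ u, ∫⁻ v, (κ v A + dTV (κ u) (κ v)) ∂β ∂α =
        (β.bind κ) A * cm + I := by
      have inner : ∀ u, ∫⁻ v, (κ v A + dTV (κ u) (κ v)) ∂β =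
          (β.bind κ) A + ∫⁻ v, dTV (κ u) (κ v) ∂β := by
        intro u
        rw [lintegral_add_left hκA, hb β A hA]
      simp_rw [inner]
      rw [lintegral_add_left measurable_const, lintegral_const, hα, hI,
        lintegral_prod _ hD.aemeasurable]
    calc (α.bind κ) A * cm ≤ ∫⁻ u, ∫⁻ v, (κ v A + dTV (κ u) (κ v)) ∂β ∂α :=
          step1 ▸ step2
      _ = (β.bind κ) A * cm + I := step3
  have main : ∀ A : Set E, MeasurableSet A → (α.bind κ) A - (β.bind κ) A ≤ I / cm := by
    intro A hA
    rw [tsub_le_iff_left]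
    have h1 := key A hA
    rw [← ENNReal.mul_le_mul_iff_left h0 htop, add_mul,
      ENNReal.div_mul_cancel h0 htop]
    exact h1
  have hmass : ∀ (m : Measure E), m univ = cm → (m.bind κ) univ = cm := by
    intro m hm
    rw [hb m univ MeasurableSet.univ]
    simp only [measure_univ]
    rw [lintegral_one, hm]
  refine dTV_le fun A hA => ⟨main A hA, ?_⟩
  rw [sub_eq_compl_sub (by rw [hmass α hα, hmass β hβ]) (by rw [hmass α hα]; exact htop) hA]
  exact main Aᶜ hA.compl

/-- Explicit formula for `dTV` of two probability measures in terms of the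
Radon-Nikodym derivative and the singular part. -/
lemma dTV_eq_formula (μ ν : Measure E) [IsProbabilityMeasure μ] [IsProbabilityMeasure ν] :
    dTV μ ν = (1 - ∫⁻ y, μ.rnDeriv ν y ∂ν) + ∫⁻ y, (μ.rnDeriv ν y - 1) ∂ν := by
  set f := μ.rnDeriv ν with hf
  have hf_meas : Measurable f := Measure.measurable_rnDeriv μ ν
  have hdec : μ.singularPart ν + ν.withDensity f = μ :=
    Measure.singularPart_add_rnDeriv μ ν
  set s : Measure E := μ.singularPart ν with hsdef
  have happ : ∀ A : Set E, MeasurableSet A →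
      μ A = s A + ∫⁻ y in A, f y ∂ν := by
    intro A hA
    conv_lhs => rw [← hdec]
    rw [Measure.coe_add, Pi.add_apply, withDensity_apply _ hA]
  have huniv := happ univ MeasurableSet.univ
  rw [measure_univ, setLIntegral_univ] at huniv
  have hint_fin : ∫⁻ y, f y ∂ν ≠ ∞ := by
    intro h
    rw [h, add_top] at huniv
    exact one_ne_top huniv
  have hs_univ : s univ = 1 - ∫⁻ y, f y ∂ν :=
    (ENNReal.sub_eq_of_eq_add hint_fin (by rw [huniv, add_comm])).symm
  rw [← hs_univ]
  set T : ℝ≥0∞ := s univ + ∫⁻ y, (f y - 1) ∂ν with hT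
  have hsub_fin : ∫⁻ y, (f y - 1) ∂ν ≠ ∞ :=
    fun h => hint_fin (top_le_iff.mp (h ▸ lintegral_mono fun y => tsub_le_self))
  have hT_fin : T ≠ ∞ := by
    rw [hT]
    exact ENNReal.add_ne_top.mpr ⟨(measure_lt_top s univ).ne, hsub_fin⟩
  -- upper bound
  have hupper : ∀ A : Set E, MeasurableSet A → μ A - ν A ≤ T := by
    intro A hA
    rw [tsub_le_iff_right]
    calc μ A = s A + ∫⁻ y in A, f y ∂ν := happ A hA
      _ ≤ s univ + ∫⁻ y in A, (1 + (f y - 1)) ∂ν := by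
          exact add_le_add (measure_mono (subset_univ A))
            (setLIntegral_mono (measurable_const.add (hf_meas.sub measurable_const))
              fun y _ => le_add_tsub)
      _ = s univ + (ν A + ∫⁻ y in A, (f y - 1) ∂ν) := by
          rw [lintegral_add_left measurable_const, setLIntegral_const, one_mul]
      _ ≤ s univ + (ν A + ∫⁻ y, (f y - 1) ∂ν) := by
          exact add_le_add_right (add_le_add_right
            (setLIntegral_le_lintegral _ _) _) _
      _ = T + ν A := by rw [hT]; ring
  -- the lower bound: the supremum is attained
  obtain ⟨sset, hsm, hs0, hsc0⟩ := Measure.mutuallySingular_singularPart μ ν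
  have hlower : T ≤ dTV μ ν := by
    set B : Set E := {y | 1 < f y} with hB
    have hBm : MeasurableSet B := measurableSet_lt measurable_const hf_meas
    set A : Set E := B ∪ ssetᶜ with hA
    have hAm : MeasurableSet A := hBm.union hsm.compl
    have hνA : ν A = ν B := by
      refine le_antisymm ?_ (measure_mono subset_union_left)
      calc ν A ≤ ν B + ν ssetᶜ := measure_union_le _ _
        _ = ν B := by rw [hsc0, add_zero]
    have hsA : s A = s univ := by
      refine le_antisymm (measure_mono (subset_univ _)) ?_
      calc s univ = s (sset ∪ ssetᶜ) := by rw [union_compl_self]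
      _ ≤ s sset + s ssetᶜ := measure_union_le _ _
      _ = s ssetᶜ := by rw [hs0, zero_add]
      _ ≤ s A := measure_mono subset_union_right
    have hrestr : ∫⁻ y in A, f y ∂ν = ∫⁻ y in B, f y ∂ν := by
      have : A =ᵐ[ν] B := by
        rw [Filter.eventuallyEq_set]
        have h1 : ν (A \ B) = 0 := measure_mono_null (fun y hy => hy.1.elim
          (fun h => absurd h hy.2) id) hsc0
        have h2 : ν {y | ¬ (y ∈ A ↔ y ∈ B)} ≤ ν (A \ B) := measure_mono (by
          intro y hy
          simp only [mem_setOf_eq, iff_iff_implies_and_implies, not_and_or] at hy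
          rcases hy with h | h
          · push_neg at h
            exact ⟨h.1, h.2⟩
          · push_neg at h
            exact absurd (subset_union_left h.1) h.2)
        exact le_antisymm (h2.trans h1.le) zero_le
      rw [Measure.restrict_congr_set this]
    have hBint : ∫⁻ y in B, f y ∂ν = ∫⁻ y in B, (f y - 1) ∂ν + ν B := by
      rw [← setLIntegral_one B, ← lintegral_add_right _ measurable_const]
      refine setLIntegral_congr_fun hBm (fun y hy => ?_)
      exact (tsub_add_cancel_of_le (le_of_lt hy)).symm
    have hBfull : ∫⁻ y in B, (f y - 1) ∂ν = ∫⁻ y, (f y - 1) ∂ν := by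
      have hzero : ∫⁻ y in Bᶜ, (f y - 1) ∂ν = 0 := by
        rw [setLIntegral_congr_fun hBm.compl (fun y hy =>
          tsub_eq_zero_of_le (not_lt.mp hy)), lintegral_zero]
      conv_rhs => rw [← lintegral_add_compl (fun y => f y - 1) hBm]
      rw [hzero, add_zero]
    have hμA : μ A = T + ν A := by
      rw [happ A hAm, hsA, hrestr, hBint, hBfull, hνA, hT, add_assoc]
    have : T ≤ μ A - ν A :=
      ENNReal.le_sub_of_add_le_right (measure_lt_top ν A).ne (le_of_eq hμA.symm)
    exact this.trans (sub_le_dTV hAm)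
  refine le_antisymm (dTV_le fun A hA => ⟨hupper A hA, ?_⟩) hlower
  rw [sub_eq_compl_sub (by simp) (by simp) hA]
  exact hupper Aᶜ hA.compl

/-- Joint measurability of the total variation distance between two kernels. -/
lemma measurable_dTV {α : Type*} [MeasurableSpace α] [MeasurableSpace.CountablyGenerated E]
    (κ η : Kernel α E) [IsMarkovKernel κ] [IsMarkovKernel η] :
    Measurable fun a => dTV (κ a) (η a) := by
  have hrn : Measurable (Function.uncurry (Kernel.rnDeriv κ η)) := Kernel.measurable_rnDeriv κ η
  have heq : (fun a => dTV (κ a) (η a)) = fun a =>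
      (1 - ∫⁻ y, Kernel.rnDeriv κ η a y ∂η a) + ∫⁻ y, (Kernel.rnDeriv κ η a y - 1) ∂η a := by
    funext a
    rw [dTV_eq_formula (κ a) (η a)]
    have hae := Kernel.rnDeriv_eq_rnDeriv_measure (κ := κ) (η := η) (a := a)
    congr 1
    · congr 1
      exact lintegral_congr_ae (hae.mono fun y hy => hy.symm)
    · exact lintegral_congr_ae (hae.mono fun y hy => by simp only [← hy])
  rw [heq]
  refine Measurable.add (Measurable.sub measurable_const ?_) ?_
  · exact Measurable.lintegral_kernel_prod_right hrn
  · exact Measurable.lintegral_kernel_prod_right (hrn.sub measurable_const)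

section Semigroup

variable {P : ℝ≥0 → Kernel E E}

lemma bind_of_sem (hsem : ∀ s t : ℝ≥0, P (s + t) = (P t) ∘ₖ (P s)) (s t : ℝ≥0) (x : E) :
    P (s + t) x = (P s x).bind (P t) := by
  rw [hsem s t, Kernel.comp_apply]

lemma ac_bind {ν₁ ν₂ : Measure E} (κ : Kernel E E) (h : ν₁ ≪ ν₂) :
    ν₁.bind κ ≪ ν₂.bind κ := by
  refine Measure.AbsolutelyContinuous.mk fun A hA h2 => ?_
  rw [Measure.bind_apply hA (Kernel.measurable κ).aemeasurable] at h2 ⊢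
  have hnull : ν₂ {x | κ x A ≠ 0} = 0 := by
    have := (lintegral_eq_zero_iff (Kernel.measurable_coe κ hA)).mp h2
    simpa [Filter.EventuallyEq, ae_iff] using this
  have hnull1 : ν₁ {x | κ x A ≠ 0} = 0 := h hnull
  rw [lintegral_eq_zero_iff (Kernel.measurable_coe κ hA)]
  rw [Filter.EventuallyEq, ae_iff]
  simpa using hnull1

lemma equiv_boost (hsem : ∀ s t : ℝ≥0, P (s + t) = (P t) ∘ₖ (P s))
    (hreg : ∀ x y : E, ∃ t : ℝ≥0, 0 < t ∧ P t x ≪ P t y ∧ P t y ≪ P t x) (x y : E) :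
    ∃ N : ℕ, ∀ n : ℕ, N ≤ n → (P n x ≪ P n y ∧ P n y ≪ P n x) := by
  obtain ⟨t₀, _, hxy, hyx⟩ := hreg x y
  refine ⟨⌈(t₀ : ℝ)⌉₊, fun n hn => ?_⟩
  have ht : t₀ ≤ (n : ℝ≥0) := by
    have := Nat.ceil_le.mp hn
    exact_mod_cast this
  have hrw : ∀ z : E, P n z = (P t₀ z).bind (P ((n : ℝ≥0) - t₀)) := by
    intro z
    rw [← bind_of_sem hsem t₀ ((n : ℝ≥0) - t₀) z, add_tsub_cancel_of_le ht]
  rw [hrw x, hrw y]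
  exact ⟨ac_bind _ hxy, ac_bind _ hyx⟩

lemma inv_bind {μ : Measure E}
    (hμ : ∀ (t : ℝ≥0) (A : Set E), MeasurableSet A → μ A = ∫⁻ x, P t x A ∂μ) (t : ℝ≥0) :
    μ.bind (P t) = μ := by
  ext A hA
  rw [Measure.bind_apply hA (Kernel.measurable _).aemeasurable]
  exact (hμ t A hA).symm

/-- Eventually, `P n x` is absolutely continuous w.r.t. any invariant probability
measure. -/
lemma ac_mu (_hP : ∀ t, IsMarkovKernel (P t))
    (hsem : ∀ s t : ℝ≥0, P (s + t) = (P t) ∘ₖ (P s))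
    (hreg : ∀ x y : E, ∃ t : ℝ≥0, 0 < t ∧ P t x ≪ P t y ∧ P t y ≪ P t x)
    {μ : Measure E} [IsProbabilityMeasure μ] (hμ : ∀ t : ℝ≥0, μ.bind (P t) = μ) (x : E) :
    ∃ M : ℕ, ∀ n : ℕ, M ≤ n → P n x ≪ μ := by
  -- first, find one good time
  have key : ∃ M : ℕ, P M x ≪ μ := by
    by_contra hcon
    push_neg at hcon
    have hex : ∀ n : ℕ, ∃ A : Set E, μ A = 0 ∧ P n x A ≠ 0 := by
      intro n
      have := hcon n
      rw [Measure.AbsolutelyContinuous] at this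
      push_neg at this
      exact this
    choose A hA0 hAx using hex
    set B : Set E := toMeasurable μ (⋃ n, A n) with hB
    have hBm : MeasurableSet B := measurableSet_toMeasurable _ _
    have hBμ : μ B = 0 := by
      rw [hB, measure_toMeasurable]
      exact measure_iUnion_null hA0
    have hBx : ∀ n : ℕ, P n x B ≠ 0 := fun n h =>
      hAx n (le_antisymm (le_trans (measure_mono ((subset_iUnion A n).trans
        (subset_toMeasurable _ _))) h.le) zero_le)
    -- a.e. point never charges B
    have hae : ∀ k : ℕ, μ {y | P k y B ≠ 0} = 0 := by
      intro k
      have h2 : ∫⁻ y, P k y B ∂μ = 0 := by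
        rw [← Measure.bind_apply hBm (Kernel.measurable _).aemeasurable, hμ k]
        exact hBμ
      have := (lintegral_eq_zero_iff (Kernel.measurable_coe _ hBm)).mp h2
      simpa [Filter.EventuallyEq, ae_iff] using this
    have hU : μ (⋃ k : ℕ, {y | P k y B ≠ 0}) = 0 := measure_iUnion_null hae
    have hex_y : ∃ y₀ : E, y₀ ∉ ⋃ k : ℕ, {y | P k y B ≠ 0} := by
      by_contra h
      push_neg at h
      have : μ univ = 0 := measure_mono_null (fun y _ => h y) hU
      simp at this
    obtain ⟨y₀, hy₀⟩ := hex_y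
    have hy₀' : ∀ k : ℕ, P k y₀ B = 0 := by
      intro k
      by_contra h
      exact hy₀ (mem_iUnion.mpr ⟨k, h⟩)
    obtain ⟨N, hN⟩ := equiv_boost hsem hreg x y₀
    exact hBx N ((hN N le_rfl).1 (hy₀' N))
  obtain ⟨M, hM⟩ := key
  refine ⟨M, fun n hn => ?_⟩
  have hrw : P n x = (P M x).bind (P ((n : ℝ≥0) - M)) := by
    rw [← bind_of_sem hsem M ((n : ℝ≥0) - M) x, add_tsub_cancel_of_le (by exact_mod_cast hn)]
  rw [hrw]
  calc (P M x).bind (P ((n : ℝ≥0) - M)) ≪ μ.bind (P ((n : ℝ≥0) - M)) := ac_bind _ hM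
    _ = μ := hμ _

end Semigroup

section Pair

variable [MeasurableSpace.CountablyGenerated E]
variable (Q : ℕ → Kernel E E) [hQM : ∀ n, IsMarkovKernel (Q n)]

/-- The product (pair) kernel at time `n`. -/
noncomputable def pairK (n : ℕ) : Kernel (E × E) (E × E) :=
  ((Q n).comap Prod.fst measurable_fst) ×ₖ ((Q n).comap Prod.snd measurable_snd)

instance (n : ℕ) : IsMarkovKernel (pairK Q n) := by
  unfold pairK; infer_instance

lemma pairK_apply (n : ℕ) (p : E × E) :
    pairK Q n p = (Q n p.1).prod (Q n p.2) := by
  rw [pairK, Kernel.prod_apply, Kernel.comap_apply, Kernel.comap_apply]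

/-- Total variation distance between the images of the two coordinates. -/
noncomputable def Dfun (n : ℕ) : E × E → ℝ≥0∞ := fun p => dTV (Q n p.1) (Q n p.2)

/-- Its decreasing limit. -/
noncomputable def cfun : E × E → ℝ≥0∞ := fun p => ⨅ n, Dfun Q n p

lemma measurable_Dfun (n : ℕ) : Measurable (Dfun Q n) := by
  have := measurable_dTV ((Q n).comap Prod.fst measurable_fst)
    ((Q n).comap Prod.snd measurable_snd)
  exact this

lemma Dfun_le_one (n : ℕ) (p : E × E) : Dfun Q n p ≤ 1 := dTV_le_one _ _

lemma measurable_cfun : Measurable (cfun Q) :=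
  Measurable.iInf fun n => measurable_Dfun Q n

lemma cfun_le_one (p : E × E) : cfun Q p ≤ 1 :=
  (iInf_le _ 0).trans (Dfun_le_one Q 0 p)

variable (hQsem : ∀ (n k : ℕ) (x : E), Q (n + k) x = (Q n x).bind (Q k))

include hQsem in
lemma antitone_Dfun : Antitone fun n => Dfun Q n := by
  refine antitone_nat_of_succ_le fun n => ?_
  intro p
  have h1 : Q (n + 1) p.1 = (Q n p.1).bind (Q 1) := hQsem n 1 p.1
  have h2 : Q (n + 1) p.2 = (Q n p.2).bind (Q 1) := hQsem n 1 p.2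
  simp only [Dfun, h1, h2]
  exact dTV_bind_le (Q 1) inferInstance inferInstance

include hQsem in
lemma Dfun_bind_le (n k : ℕ) (p : E × E) :
    Dfun Q (n + k) p ≤ ∫⁻ q, Dfun Q k q ∂((Q n p.1).prod (Q n p.2)) := by
  have h1 : Q (n + k) p.1 = (Q n p.1).bind (Q k) := hQsem n k p.1
  have h2 : Q (n + k) p.2 = (Q n p.2).bind (Q k) := hQsem n k p.2
  simp only [Dfun, h1, h2]
  have := dTV_bind_le_lintegral (E := E) (Q k) (α := Q n p.1) (β := Q n p.2)
    (cm := 1) measure_univ measure_univ one_ne_zero one_ne_top (measurable_Dfun Q k)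
  simpa [Dfun] using this

include hQsem in
lemma lintegral_cfun_prod (α β : Measure E) [IsFiniteMeasure α] [IsFiniteMeasure β] :
    ∫⁻ q, cfun Q q ∂(α.prod β) = ⨅ k, ∫⁻ q, Dfun Q k q ∂(α.prod β) := by
  simp only [cfun]
  exact lintegral_iInf (fun k => measurable_Dfun Q k)
    (fun i j hij => (antitone_Dfun Q hQsem) hij)
    (ne_of_lt (lt_of_le_of_lt (lintegral_mono fun q => Dfun_le_one Q 0 q)
      (by rw [lintegral_one]; exact measure_lt_top _ _)))

include hQsem in
lemma cfun_le_lintegral_pairK (n : ℕ) (p : E × E) :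
    cfun Q p ≤ ∫⁻ q, cfun Q q ∂(pairK Q n p) := by
  rw [pairK_apply, lintegral_cfun_prod Q hQsem]
  refine le_iInf fun k => ?_
  exact (iInf_le _ (n + k)).trans (Dfun_bind_le Q hQsem n k p)

end Pair

section Variance

variable {F : Type*} [MeasurableSpace F]

lemma integrable_of_le_one {K : Measure F} [IsProbabilityMeasure K] {g : F → ℝ}
    (hg : Measurable g) (hb : ∀ x, |g x| ≤ 1) : Integrable g K := by
  refine (integrable_const (1:ℝ)).mono' hg.aestronglyMeasurable ?_
  exact Filter.Eventually.of_forall fun x => by simpa using hb x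

lemma real_var_eq (K : Measure F) [IsProbabilityMeasure K] {g : F → ℝ}
    (hg : Measurable g) (h0 : ∀ x, 0 ≤ g x) (h1 : ∀ x, g x ≤ 1) :
    ∫ x, (g x - ∫ y, g y ∂K)^2 ∂K = ∫ x, g x^2 ∂K - (∫ x, g x ∂K)^2 := by
  set a := ∫ y, g y ∂K with ha
  have habs : ∀ x, |g x| ≤ 1 := fun x => abs_le.mpr ⟨by linarith [h0 x], h1 x⟩
  have hint : Integrable g K := integrable_of_le_one hg habs
  have hint2 : Integrable (fun x => g x ^ 2) K := by
    refine integrable_of_le_one (hg.pow_const 2) fun x => ?_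
    rw [abs_pow]
    calc |g x| ^ 2 ≤ 1 ^ 2 := pow_le_pow_left₀ (abs_nonneg _) (habs x) 2
      _ = 1 := one_pow 2
  have hexp : ∀ x, (g x - a)^2 = g x^2 - 2*a*(g x) + a^2 := fun x => by ring
  simp_rw [hexp]
  have hintA : Integrable (fun x => g x ^ 2 - 2*a*g x) K := by
    exact hint2.sub (hint.const_mul (2*a))
  rw [integral_add hintA (integrable_const _),
    integral_sub hint2 (hint.const_mul (2*a)), integral_const_mul, integral_const]
  simp only [measure_univ, probReal_univ, ENNReal.toReal_one, smul_eq_mul, one_mul, ← ha]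
  ring

lemma sq_lintegral_le {K : Measure F} [IsProbabilityMeasure K] {f : F → ℝ≥0∞}
    (hf : Measurable f) (hf1 : ∀ x, f x ≤ 1) :
    (∫⁻ x, f x ∂K)^2 ≤ ∫⁻ x, (f x)^2 ∂K := by
  set g : F → ℝ := fun x => (f x).toReal with hgdef
  have hg : Measurable g := hf.ennreal_toReal
  have h0 : ∀ x, 0 ≤ g x := fun x => ENNReal.toReal_nonneg
  have h1 : ∀ x, g x ≤ 1 := fun x => by
    simpa [hgdef] using ENNReal.toReal_mono one_ne_top (hf1 x)
  have hne : ∀ x, f x ≠ ∞ := fun x => (lt_of_le_of_lt (hf1 x) one_lt_top).ne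
  have hI : ∫ x, g x ∂K = (∫⁻ x, f x ∂K).toReal :=
    integral_toReal hf.aemeasurable (Filter.Eventually.of_forall fun x => (hne x).lt_top)
  have hI2 : ∫ x, g x^2 ∂K = (∫⁻ x, (f x)^2 ∂K).toReal := by
    have : ∀ x, g x ^ 2 = ((f x)^2).toReal := fun x => by
      rw [hgdef]; simp [ENNReal.toReal_pow]
    simp_rw [this]
    exact integral_toReal (hf.pow_const 2).aemeasurable
      (Filter.Eventually.of_forall fun x => by
        exact ENNReal.pow_lt_top (hne x).lt_top)
  have hvar := real_var_eq K hg h0 h1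
  have hnn : 0 ≤ ∫ x, g x^2 ∂K - (∫ x, g x ∂K)^2 := by
    rw [← hvar]
    exact integral_nonneg fun x => sq_nonneg _
  have hle : (∫ x, g x ∂K)^2 ≤ ∫ x, g x^2 ∂K := by linarith
  rw [hI, hI2] at hle
  have hfin : ∫⁻ x, f x ∂K ≠ ∞ := by
    refine ne_of_lt (lt_of_le_of_lt (lintegral_mono hf1) ?_)
    rw [lintegral_one, measure_univ]; exact one_lt_top
  have hfin2 : ∫⁻ x, (f x)^2 ∂K ≠ ∞ := by
    refine ne_of_lt (lt_of_le_of_lt (lintegral_mono fun x => ?_) (by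
      rw [lintegral_one, measure_univ]; exact one_lt_top))
    calc (f x)^2 ≤ 1^2 := pow_le_pow_left' (hf1 x) 2
      _ = 1 := one_pow 2
  rw [← ENNReal.toReal_le_toReal (ENNReal.pow_ne_top hfin) hfin2, ENNReal.toReal_pow]
  exact hle

/-- If the second moment equals the square of the first moment, the function is a.e.
constant (equal to its mean). -/
lemma ae_const_of_lintegral_sq_eq {K : Measure F} [IsProbabilityMeasure K] {f : F → ℝ≥0∞}
    (hf : Measurable f) (hf1 : ∀ x, f x ≤ 1)
    (h : ∫⁻ x, (f x)^2 ∂K = (∫⁻ x, f x ∂K)^2) :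
    K {x | f x = ∫⁻ y, f y ∂K} = 1 := by
  set g : F → ℝ := fun x => (f x).toReal with hgdef
  have hg : Measurable g := hf.ennreal_toReal
  have h0 : ∀ x, 0 ≤ g x := fun x => ENNReal.toReal_nonneg
  have h1 : ∀ x, g x ≤ 1 := fun x => by
    simpa [hgdef] using ENNReal.toReal_mono one_ne_top (hf1 x)
  have habs : ∀ x, |g x| ≤ 1 := fun x => abs_le.mpr ⟨by linarith [h0 x], h1 x⟩
  have hne : ∀ x, f x ≠ ∞ := fun x => (lt_of_le_of_lt (hf1 x) one_lt_top).ne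
  have hI : ∫ x, g x ∂K = (∫⁻ x, f x ∂K).toReal :=
    integral_toReal hf.aemeasurable (Filter.Eventually.of_forall fun x => (hne x).lt_top)
  have hI2 : ∫ x, g x^2 ∂K = (∫⁻ x, (f x)^2 ∂K).toReal := by
    have : ∀ x, g x ^ 2 = ((f x)^2).toReal := fun x => by
      rw [hgdef]; simp [ENNReal.toReal_pow]
    simp_rw [this]
    exact integral_toReal (hf.pow_const 2).aemeasurable
      (Filter.Eventually.of_forall fun x => ENNReal.pow_lt_top (hne x).lt_top)
  have hvar := real_var_eq K hg h0 h1
  have hzero : ∫ x, (g x - ∫ y, g y ∂K)^2 ∂K = 0 := by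
    rw [hvar, hI, hI2, h, ENNReal.toReal_pow]
    ring
  have hint : Integrable (fun x => (g x - ∫ y, g y ∂K)^2) K := by
    refine integrable_of_le_one ((hg.sub measurable_const).pow_const 2) fun x => ?_
    rw [abs_pow]
    have : |g x - ∫ y, g y ∂K| ≤ 1 := by
      have hm0 : 0 ≤ ∫ y, g y ∂K := integral_nonneg h0
      have hm1 : ∫ y, g y ∂K ≤ 1 := by
        calc ∫ y, g y ∂K ≤ ∫ _, (1:ℝ) ∂K := by
              refine integral_mono (integrable_of_le_one hg habs) (integrable_const _) h1
          _ = 1 := by simp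
      rw [abs_le]
      constructor <;> [linarith [h1 x, h0 x]; linarith [h0 x, h1 x]]
    calc |g x - ∫ y, g y ∂K| ^ 2 ≤ 1^2 := pow_le_pow_left₀ (abs_nonneg _) this 2
      _ = 1 := one_pow 2
  have hae : (fun x => (g x - ∫ y, g y ∂K)^2) =ᵐ[K] 0 :=
    (integral_eq_zero_iff_of_nonneg (fun x => sq_nonneg _) hint).mp hzero
  have hae2 : ∀ᵐ x ∂K, f x = ∫⁻ y, f y ∂K := by
    filter_upwards [hae] with x hx
    have hgx : g x = ∫ y, g y ∂K := by
      have := sq_eq_zero_iff.mp hx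
      linarith
    have hfx : f x = ENNReal.ofReal (g x) := (ENNReal.ofReal_toReal (hne x)).symm
    rw [hfx, hgx, hI, ENNReal.ofReal_toReal]
    refine ne_of_lt (lt_of_le_of_lt (lintegral_mono hf1) ?_)
    rw [lintegral_one, measure_univ]; exact one_lt_top
  have hms : MeasurableSet {x | f x = ∫⁻ y, f y ∂K} :=
    hf (measurableSet_singleton _)
  rw [← prob_compl_eq_zero_iff hms, Set.compl_setOf]
  rw [ae_iff] at hae2
  exact hae2

lemma ae_eq_of_le_of_lintegral_le {K : Measure F} {f g : F → ℝ≥0∞}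
    (hf : Measurable f) (hg : Measurable g) (hle : ∀ x, f x ≤ g x)
    (hint : ∫⁻ x, g x ∂K ≤ ∫⁻ x, f x ∂K) (hfin : ∫⁻ x, f x ∂K ≠ ∞) :
    f =ᵐ[K] g := by
  have hsub : ∫⁻ x, (g x - f x) ∂K = 0 := by
    rw [lintegral_sub hf hfin (Filter.Eventually.of_forall hle)]
    exact tsub_eq_zero_of_le hint
  have h := (lintegral_eq_zero_iff (hg.sub hf)).mp hsub
  filter_upwards [h] with x hx
  exact le_antisymm (hle x) (tsub_eq_zero_iff_le.mp hx)

end Variance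

section Invariant

variable [MeasurableSpace.CountablyGenerated E]
variable (Q : ℕ → Kernel E E) [hQM : ∀ n, IsMarkovKernel (Q n)]

lemma bind_pairK_prod {μ : Measure E} [IsProbabilityMeasure μ]
    (hinv : ∀ n : ℕ, μ.bind (Q n) = μ) (n : ℕ) :
    (μ.prod μ).bind (pairK Q n) = μ.prod μ := by
  refine (Measure.prod_eq fun s t hs ht => ?_).symm
  rw [Measure.bind_apply (hs.prod ht) (Kernel.measurable _).aemeasurable]
  have hp : ∀ p : E × E, pairK Q n p (s ×ˢ t) = Q n p.1 s * Q n p.2 t := fun p => by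
    rw [pairK_apply, Measure.prod_prod]
  simp_rw [hp]
  rw [lintegral_prod_mul (Kernel.measurable_coe _ hs).aemeasurable
    (Kernel.measurable_coe _ ht).aemeasurable]
  rw [← Measure.bind_apply hs (Kernel.measurable _).aemeasurable, ← Measure.bind_apply ht
    (Kernel.measurable _).aemeasurable, hinv n]

/-- The limit function `cfun` is a.e. constant w.r.t. `μ ⊗ μ`. -/
lemma cfun_ae_const
    (hQsem : ∀ (n k : ℕ) (x : E), Q (n + k) x = (Q n x).bind (Q k))
    (hQreg : ∀ x y : E, ∃ N : ℕ, ∀ n : ℕ, N ≤ n → (Q n x ≪ Q n y ∧ Q n y ≪ Q n x))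
    {μ : Measure E} [IsProbabilityMeasure μ] (hinv : ∀ n : ℕ, μ.bind (Q n) = μ) :
    ∃ cbar : ℝ≥0∞, ∀ᵐ p ∂(μ.prod μ), cfun Q p = cbar := by
  set m : Measure (E × E) := μ.prod μ with hm
  set c : E × E → ℝ≥0∞ := cfun Q with hc
  have hc_meas : Measurable c := measurable_cfun Q
  have hc1 : ∀ p, c p ≤ 1 := cfun_le_one Q
  have hfin : ∀ (f : E × E → ℝ≥0∞), (∀ p, f p ≤ 1) → ∫⁻ p, f p ∂m ≠ ∞ := by
    intro f hf
    refine ne_of_lt (lt_of_le_of_lt (lintegral_mono hf) ?_)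
    rw [lintegral_one, measure_univ]; exact one_lt_top
  have hint_eq : ∀ (f : E × E → ℝ≥0∞), Measurable f → ∀ n : ℕ,
      ∫⁻ p, (∫⁻ q, f q ∂(pairK Q n p)) ∂m = ∫⁻ p, f p ∂m := by
    intro f hf n
    rw [← Measure.lintegral_bind (Kernel.measurable _).aemeasurable hf.aemeasurable, bind_pairK_prod Q hinv n]
  have hcg : ∀ n : ℕ, c =ᵐ[m] fun p => ∫⁻ q, c q ∂(pairK Q n p) := by
    intro n
    refine ae_eq_of_le_of_lintegral_le hc_meas (Measurable.lintegral_kernel hc_meas)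
      (fun p => cfun_le_lintegral_pairK Q hQsem n p)
      (le_of_eq (hint_eq c hc_meas n)) (hfin c hc1)
  have hcsq : ∀ n : ℕ, (fun p => (c p)^2) =ᵐ[m] fun p => ∫⁻ q, (c q)^2 ∂(pairK Q n p) := by
    intro n
    refine ae_eq_of_le_of_lintegral_le (hc_meas.pow_const 2)
      (Measurable.lintegral_kernel (hc_meas.pow_const 2)) (fun p => ?_)
      (le_of_eq (hint_eq _ (hc_meas.pow_const 2) n)) (hfin _ fun p => ?_)
    · calc (c p)^2 ≤ (∫⁻ q, c q ∂(pairK Q n p))^2 :=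
            pow_le_pow_left' (cfun_le_lintegral_pairK Q hQsem n p) 2
        _ ≤ ∫⁻ q, (c q)^2 ∂(pairK Q n p) := sq_lintegral_le hc_meas hc1
    · calc (c p)^2 ≤ 1^2 := pow_le_pow_left' (hc1 p) 2
        _ = 1 := one_pow 2
  have key : ∀ n : ℕ, ∀ᵐ p ∂m, pairK Q n p {q | c q = c p} = 1 := by
    intro n
    filter_upwards [hcg n, hcsq n] with p h1 h2
    have hK : ∫⁻ q, (c q)^2 ∂(pairK Q n p) = (∫⁻ q, c q ∂(pairK Q n p))^2 := by
      rw [← h2, ← h1]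
    have h3 := ae_const_of_lintegral_sq_eq (K := pairK Q n p) hc_meas hc1 hK
    have hset : {q | c q = ∫⁻ y, c y ∂(pairK Q n p)} = {q | c q = c p} := by
      rw [← h1]
    rwa [hset] at h3
  rw [← ae_all_iff] at key
  haveI : (ae m).NeBot := ae_neBot.mpr (IsProbabilityMeasure.ne_zero m)
  obtain ⟨p₀, hp₀⟩ := key.exists
  refine ⟨c p₀, ?_⟩
  filter_upwards [key] with p hp
  by_contra hne2
  obtain ⟨N₁, h₁⟩ := hQreg p.1 p₀.1
  obtain ⟨N₂, h₂⟩ := hQreg p.2 p₀.2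
  set n := max N₁ N₂ with hn
  have hac : pairK Q n p₀ ≪ pairK Q n p := by
    rw [pairK_apply, pairK_apply]
    exact Measure.AbsolutelyContinuous.prod (h₁ n (le_max_left _ _)).2
      (h₂ n (le_max_right _ _)).2
  have hSp : pairK Q n p {q | c q = c p} = 1 := hp n
  have hSp₀ : pairK Q n p₀ {q | c q = c p₀} = 1 := hp₀ n
  have hdisj : {q | c q = c p₀} ⊆ {q | c q = c p}ᶜ := by
    intro q hq hq'
    exact hne2 ((hq'.symm).trans hq)
  have hz : pairK Q n p {q | c q = c p₀} = 0 := by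
    have hms : MeasurableSet {q | c q = c p} := hc_meas (measurableSet_singleton _)
    have hcompl : pairK Q n p ({q | c q = c p}ᶜ) = 0 := by
      rw [prob_compl_eq_zero_iff hms]
      exact hSp
    exact measure_mono_null hdisj hcompl
  exact one_ne_zero (hSp₀.symm.trans (hac hz))

lemma dTV_bind_add_le (κ : Kernel E E) (γ α' β' : Measure E) :
    dTV ((γ + α').bind κ) ((γ + β').bind κ) ≤ dTV (α'.bind κ) (β'.bind κ) := by
  have happ : ∀ (ν₁ ν₂ : Measure E) (A : Set E), MeasurableSet A →
      ((ν₁ + ν₂).bind κ) A = (ν₁.bind κ) A + (ν₂.bind κ) A := by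
    intro ν₁ ν₂ A hA
    rw [Measure.bind_apply hA (Kernel.measurable _).aemeasurable, Measure.bind_apply hA (Kernel.measurable _).aemeasurable,
      Measure.bind_apply hA (Kernel.measurable _).aemeasurable, lintegral_add_measure]
  refine dTV_le fun A hA => ⟨?_, ?_⟩
  · rw [happ γ α' A hA, happ γ β' A hA, tsub_le_iff_left]
    calc (γ.bind κ) A + (α'.bind κ) A
        ≤ (γ.bind κ) A + ((β'.bind κ) A + ((α'.bind κ) A - (β'.bind κ) A)) := by
          exact add_le_add_right le_add_tsub _
      _ = (γ.bind κ) A + (β'.bind κ) A + ((α'.bind κ) A - (β'.bind κ) A) := by rw [add_assoc]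
      _ ≤ (γ.bind κ) A + (β'.bind κ) A + dTV (α'.bind κ) (β'.bind κ) :=
          add_le_add_right (sub_le_dTV hA) _
  · rw [happ γ α' A hA, happ γ β' A hA, tsub_le_iff_left]
    calc (γ.bind κ) A + (β'.bind κ) A
        ≤ (γ.bind κ) A + ((α'.bind κ) A + ((β'.bind κ) A - (α'.bind κ) A)) := by
          exact add_le_add_right le_add_tsub _
      _ = (γ.bind κ) A + (α'.bind κ) A + ((β'.bind κ) A - (α'.bind κ) A) := by rw [add_assoc]
      _ ≤ (γ.bind κ) A + (α'.bind κ) A + dTV (α'.bind κ) (β'.bind κ) := by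
          refine add_le_add_right ?_ _
          rw [dTV_symm]
          exact sub_le_dTV hA

/-- The constant value of `cfun` is zero. -/
lemma cfun_ae_zero
    (hQsem : ∀ (n k : ℕ) (x : E), Q (n + k) x = (Q n x).bind (Q k))
    (hQreg : ∀ x y : E, ∃ N : ℕ, ∀ n : ℕ, N ≤ n → (Q n x ≪ Q n y ∧ Q n y ≪ Q n x))
    {μ : Measure E} [IsProbabilityMeasure μ] (hinv : ∀ n : ℕ, μ.bind (Q n) = μ)
    (hACμ : ∀ x : E, ∃ M : ℕ, ∀ n : ℕ, M ≤ n → Q n x ≪ μ) :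
    ∀ᵐ p ∂(μ.prod μ), cfun Q p = 0 := by
  obtain ⟨cbar, hcbar⟩ := cfun_ae_const Q hQsem hQreg hinv
  suffices hz : cbar = 0 by
    filter_upwards [hcbar] with p hp
    rw [hp, hz]
  haveI : (ae (μ.prod μ)).NeBot := ae_neBot.mpr (IsProbabilityMeasure.ne_zero _)
  obtain ⟨p₀, hp₀⟩ := hcbar.exists
  obtain ⟨M₁, hM₁⟩ := hACμ p₀.1
  obtain ⟨M₂, hM₂⟩ := hACμ p₀.2
  obtain ⟨N, hN⟩ := hQreg p₀.1 p₀.2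
  set m₀ : ℕ := max N (max M₁ M₂) with hm₀
  set α : Measure E := Q m₀ p₀.1 with hα
  set β : Measure E := Q m₀ p₀.2 with hβ
  haveI : IsProbabilityMeasure α := by rw [hα]; infer_instance
  haveI : IsProbabilityMeasure β := by rw [hβ]; infer_instance
  have hαμ : α ≪ μ := hM₁ m₀ ((le_max_left M₁ M₂).trans (le_max_right _ _))
  have hβμ : β ≪ μ := hM₂ m₀ ((le_max_right M₁ M₂).trans (le_max_right _ _))
  have hαβ : α ≪ β := (hN m₀ (le_max_left _ _)).1
  set ρ : E → ℝ≥0∞ := α.rnDeriv β with hρ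
  have hρ_meas : Measurable ρ := Measure.measurable_rnDeriv α β
  have hαd : β.withDensity ρ = α := Measure.withDensity_rnDeriv_eq α β hαβ
  set γ : Measure E := β.withDensity (fun y => min (ρ y) 1) with hγ
  set α' : Measure E := β.withDensity (fun y => ρ y - 1) with hα'
  set β' : Measure E := β.withDensity (fun y => 1 - ρ y) with hβ'
  have hsplitα : γ + α' = α := by
    rw [hγ, hα', ← withDensity_add_left (hρ_meas.min measurable_const), ← hαd]
    congr 1
    funext y
    rcases le_total (ρ y) 1 with h | h
    · rw [Pi.add_apply, min_eq_left h, tsub_eq_zero_of_le h, add_zero]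
    · rw [Pi.add_apply, min_eq_right h, add_tsub_cancel_of_le h]
  have hsplitβ : γ + β' = β := by
    rw [hγ, hβ', ← withDensity_add_left (hρ_meas.min measurable_const)]
    have : ((fun y => min (ρ y) 1) + fun y => 1 - ρ y) = fun _ => (1:ℝ≥0∞) := by
      funext y
      rcases le_total (ρ y) 1 with h | h
      · rw [Pi.add_apply, min_eq_left h, add_tsub_cancel_of_le h]
      · rw [Pi.add_apply, min_eq_right h, tsub_eq_zero_of_le h, add_zero]
    rw [this]
    exact withDensity_one
  set o : ℝ≥0∞ := γ univ with ho
  set cm : ℝ≥0∞ := α' univ with hcm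
  have hoc : o + cm = 1 := by
    rw [ho, hcm, ← Measure.add_apply, hsplitα, measure_univ]
  have ho_fin : o ≠ ∞ := by
    intro h
    rw [h] at hoc
    simp at hoc
  have hβ'univ : β' univ = cm := by
    have h2 : o + β' univ = 1 := by
      rw [ho, ← Measure.add_apply, hsplitβ, measure_univ]
    exact (ENNReal.add_right_inj ho_fin).mp (h2.trans hoc.symm)
  have hcm_le1 : cm ≤ 1 := by rw [← hoc]; exact le_add_self
  have hcm_fin : cm ≠ ∞ := (lt_of_le_of_lt hcm_le1 one_lt_top).ne
  have hcbar_le1 : cbar ≤ 1 := by rw [← hp₀]; exact cfun_le_one Q p₀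
  have ho_ne : o ≠ 0 := by
    intro h0
    have hγu : γ univ = ∫⁻ y, min (ρ y) 1 ∂β := by
      rw [hγ, withDensity_apply _ MeasurableSet.univ, setLIntegral_univ]
    have hint0 : ∫⁻ y, min (ρ y) 1 ∂β = 0 := by rw [← hγu, ← ho]; exact h0
    have hae0 := (lintegral_eq_zero_iff (hρ_meas.min measurable_const)).mp hint0
    have hρ0 : ρ =ᵐ[β] 0 := by
      filter_upwards [hae0] with y hy
      rcases le_total (ρ y) 1 with h | h
      · rwa [min_eq_left h] at hy
      · rw [min_eq_right h] at hy
        exact absurd hy one_ne_zero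
    have hαu : α univ = 0 := by
      rw [← hαd, withDensity_apply _ MeasurableSet.univ, setLIntegral_univ,
        lintegral_congr_ae hρ0]
      simp
    rw [measure_univ] at hαu
    exact one_ne_zero hαu
  by_cases hcm0 : cm = 0
  · -- in this case α = β and cbar = 0 directly
    have hα'0 : α' = 0 := Measure.measure_univ_eq_zero.mp (by rw [← hcm]; exact hcm0)
    have hβ'0 : β' = 0 := Measure.measure_univ_eq_zero.mp (by rw [hβ'univ]; exact hcm0)
    have hαβeq : α = β := by rw [← hsplitα, ← hsplitβ, hα'0, hβ'0]
    refine le_antisymm ?_ zero_le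
    rw [← hp₀]
    calc cfun Q p₀ ≤ Dfun Q m₀ p₀ := iInf_le _ m₀
      _ = dTV α β := rfl
      _ = 0 := by rw [hαβeq, dTV_self]
  · -- main case
    haveI : IsFiniteMeasure α' := ⟨by rw [← hcm]; exact hcm_fin.lt_top⟩
    haveI : IsFiniteMeasure β' := ⟨by rw [hβ'univ]; exact hcm_fin.lt_top⟩
    have hkey : ∀ n : ℕ, cbar * cm ≤ ∫⁻ q, Dfun Q n q ∂(α'.prod β') := by
      intro n
      have h1 : cbar ≤ dTV (α.bind (Q n)) (β.bind (Q n)) := by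
        rw [← hp₀]
        refine le_trans (iInf_le (fun k => Dfun Q k p₀) (m₀ + n)) ?_
        simp only [Dfun, hQsem m₀ n]
        exact le_rfl
      have h2 : dTV (α.bind (Q n)) (β.bind (Q n)) ≤ dTV (α'.bind (Q n)) (β'.bind (Q n)) := by
        conv_lhs => rw [← hsplitα, ← hsplitβ]
        exact dTV_bind_add_le (Q n) γ α' β'
      have h3 : dTV (α'.bind (Q n)) (β'.bind (Q n)) ≤
          (∫⁻ q, Dfun Q n q ∂(α'.prod β')) / cm := by
        have := dTV_bind_le_lintegral (Q n) (α := α') (β := β') (cm := cm)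
          hcm.symm hβ'univ hcm0 hcm_fin (measurable_Dfun Q n)
        simpa [Dfun] using this
      have h4 := le_trans h1 (le_trans h2 h3)
      rwa [ENNReal.le_div_iff_mul_le (Or.inl hcm0) (Or.inl hcm_fin)] at h4
    have hα'μ : α' ≪ μ :=
      (Measure.absolutelyContinuous_of_le (by rw [← hsplitα]; exact Measure.le_add_left le_rfl)).trans hαμ
    have hβ'μ : β' ≪ μ :=
      (Measure.absolutelyContinuous_of_le (by rw [← hsplitβ]; exact Measure.le_add_left le_rfl)).trans hβμ
    have hprodAC : α'.prod β' ≪ μ.prod μ := hα'μ.prod hβ'μ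
    have hconst : ∫⁻ q, cfun Q q ∂(α'.prod β') = cbar * (cm * cm) := by
      rw [lintegral_congr_ae (hcbar.filter_mono hprodAC.ae_le), lintegral_const,
        ← univ_prod_univ, Measure.prod_prod, ← hcm, hβ'univ]
    have hfinal : cbar * cm ≤ cbar * cm * cm := by
      calc cbar * cm ≤ ⨅ n, ∫⁻ q, Dfun Q n q ∂(α'.prod β') := le_iInf hkey
        _ = ∫⁻ q, cfun Q q ∂(α'.prod β') := (lintegral_cfun_prod Q hQsem α' β').symm
        _ = cbar * (cm * cm) := hconst
        _ = cbar * cm * cm := by ring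
    by_contra hc0
    have hX0 : cbar * cm ≠ 0 := mul_ne_zero hc0 hcm0
    have hXfin : cbar * cm ≠ ∞ :=
      ENNReal.mul_ne_top (lt_of_le_of_lt hcbar_le1 one_lt_top).ne hcm_fin
    have h1le : 1 ≤ cm := by
      nth_rewrite 1 [← mul_one (cbar * cm)] at hfinal
      rwa [ENNReal.mul_le_mul_iff_right hX0 hXfin] at hfinal
    have hlt : cm < 1 := by
      have := ENNReal.lt_add_right hcm_fin ho_ne
      rwa [add_comm, hoc] at this
    exact absurd h1le (not_le.mpr hlt)

end Invariant

section Final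

variable [MeasurableSpace.CountablyGenerated E]

lemma dTV_tendsto (P : ℝ≥0 → Kernel E E) (hP : ∀ t, IsMarkovKernel (P t))
    (hsem : ∀ s t : ℝ≥0, P (s + t) = (P t) ∘ₖ (P s))
    (hreg : ∀ x y : E, ∃ t : ℝ≥0, 0 < t ∧ P t x ≪ P t y ∧ P t y ≪ P t x)
    {μ : Measure E} [IsProbabilityMeasure μ]
    (hinv : ∀ t : ℝ≥0, μ.bind (P t) = μ) (x : E) :
    Tendsto (fun t : ℝ≥0 => dTV (P t x) μ) atTop (nhds 0) := by
  haveI : ∀ t, IsMarkovKernel (P t) := hP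
  set Q : ℕ → Kernel E E := fun n => P n with hQ
  haveI hQM : ∀ n, IsMarkovKernel (Q n) := fun n => hP _
  have hQsem : ∀ (n k : ℕ) (z : E), Q (n + k) z = (Q n z).bind (Q k) := by
    intro n k z
    show P ((n + k : ℕ) : ℝ≥0) z = ((P (n : ℝ≥0)) z).bind (P (k : ℝ≥0))
    have hcast : ((n + k : ℕ) : ℝ≥0) = (n : ℝ≥0) + (k : ℝ≥0) := by push_cast; ring
    rw [hcast, bind_of_sem hsem]
  have hQreg : ∀ a b : E, ∃ N : ℕ, ∀ n : ℕ, N ≤ n → (Q n a ≪ Q n b ∧ Q n b ≪ Q n a) :=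
    fun a b => equiv_boost hsem hreg a b
  have hQinv : ∀ n : ℕ, μ.bind (Q n) = μ := fun n => hinv _
  have hACμ : ∀ z : E, ∃ M : ℕ, ∀ n : ℕ, M ≤ n → Q n z ≪ μ :=
    fun z => ac_mu hP hsem hreg hinv z
  have hc0 := cfun_ae_zero Q hQsem hQreg hQinv hACμ
  obtain ⟨M, hM⟩ := hACμ x
  have hνμ : Q M x ≪ μ := hM M le_rfl
  set J : ℕ → ℝ≥0∞ := fun n => ∫⁻ q, Dfun Q n q ∂((Q M x).prod μ) with hJ
  have hJanti : Antitone J := fun i j hij =>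
    lintegral_mono fun q => antitone_Dfun Q hQsem hij q
  have hJ0 : (⨅ n, J n) = 0 := by
    rw [hJ]
    simp only
    rw [← lintegral_cfun_prod Q hQsem (Q M x) μ]
    have hae : ∀ᵐ q ∂((Q M x).prod μ), cfun Q q = 0 :=
      hc0.filter_mono (Measure.AbsolutelyContinuous.ae_le
        (hνμ.prod (Measure.AbsolutelyContinuous.refl μ)))
    rw [lintegral_congr_ae hae]
    simp
  have hJtend : Tendsto J atTop (nhds 0) := hJ0 ▸ tendsto_atTop_iInf hJanti
  have hbound : ∀ n : ℕ, dTV (P ((M + n : ℕ) : ℝ≥0) x) μ ≤ J n := by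
    intro n
    have h1 : P ((M + n : ℕ) : ℝ≥0) x = (Q M x).bind (Q n) := hQsem M n x
    rw [h1]
    nth_rewrite 1 [(hQinv n).symm]
    have := dTV_bind_le_lintegral (Q n) (α := Q M x) (β := μ) (cm := 1)
      measure_univ measure_univ one_ne_zero one_ne_top (measurable_Dfun Q n)
    rw [div_one] at this; exact this
  rw [ENNReal.tendsto_nhds_zero]
  intro ε hε
  obtain ⟨n, hn⟩ := ((ENNReal.tendsto_nhds_zero.mp hJtend) ε hε).exists
  refine Filter.eventually_atTop.mpr ⟨((M + n : ℕ) : ℝ≥0), fun t ht => ?_⟩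
  have hdecomp : P t x = (P ((M + n : ℕ) : ℝ≥0) x).bind (P (t - ((M + n : ℕ) : ℝ≥0))) := by
    rw [← bind_of_sem hsem _ _ x, add_tsub_cancel_of_le ht]
  have hmono : dTV (P t x) μ ≤ dTV (P ((M + n : ℕ) : ℝ≥0) x) μ := by
    rw [hdecomp]
    nth_rewrite 1 [(hinv (t - ((M + n : ℕ) : ℝ≥0))).symm]
    exact dTV_bind_le _ inferInstance inferInstance
  exact hmono.trans ((hbound n).trans hn)

end Final

end DoobAux

/-- The total variation distance `‖μ - ν‖` between two (probability) measures,
with values in `[0,2]`: `‖μ - ν‖ = 2 ⨆_{A measurable} |μ A - ν A|`. -/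
noncomputable def tvDist {E : Type*} [MeasurableSpace E] (μ ν : Measure E) : ℝ≥0∞ :=
  2 * ⨆ (A : Set E) (_ : MeasurableSet A), ((μ A - ν A) ⊔ (ν A - μ A))

/-- **Continuous-time Doob theorem.** Let `(P_t)_{t ≥ 0}` be a Markov semigroup
(`P_{s+t}(x,A) = ∫ P_t(y,A) P_s(x,dy)`, `P_0 = id`; no regularity in `t` is required) on a
countably generated measurable space with measurable diagonal. If for each pair `x, y` there
is `t > 0` with `P_t(x,·) ∼ P_t(y,·)`, then there is at most one invariant probability
measure, and if an invariant `μ` exists then `‖P_t(x,·) - μ‖ → 0` as `t → ∞`, for every `x`. -/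
theorem doob_continuous_time
    {E : Type*} [MeasurableSpace E] [MeasurableSpace.CountablyGenerated E]
    (hΔ : MeasurableSet {p : E × E | p.1 = p.2})
    (P : ℝ≥0 → ProbabilityTheory.Kernel E E) (hP : ∀ t, IsMarkovKernel (P t))
    (h0 : P 0 = ProbabilityTheory.Kernel.id)
    (hsem : ∀ s t : ℝ≥0, P (s + t) = (P t) ∘ₖ (P s))
    (hreg : ∀ x y : E, ∃ t : ℝ≥0, 0 < t ∧
      P t x ≪ P t y ∧ P t y ≪ P t x) :
    (∀ μ₁ μ₂ : Measure E, IsProbabilityMeasure μ₁ → IsProbabilityMeasure μ₂ →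
      (∀ (t : ℝ≥0) (A : Set E), MeasurableSet A → μ₁ A = ∫⁻ x, P t x A ∂μ₁) →
      (∀ (t : ℝ≥0) (A : Set E), MeasurableSet A → μ₂ A = ∫⁻ x, P t x A ∂μ₂) → μ₁ = μ₂) ∧
    (∀ μ : Measure E, IsProbabilityMeasure μ →
      (∀ (t : ℝ≥0) (A : Set E), MeasurableSet A → μ A = ∫⁻ x, P t x A ∂μ) →
      ∀ x : E, Tendsto (fun t : ℝ≥0 => tvDist (P t x) μ) atTop (nhds 0)) := by
  classical
  haveI : ∀ t, IsMarkovKernel (P t) := hP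
  have hconv : ∀ μ : Measure E, IsProbabilityMeasure μ →
      (∀ (t : ℝ≥0) (A : Set E), MeasurableSet A → μ A = ∫⁻ x, P t x A ∂μ) →
      ∀ x : E, Tendsto (fun t : ℝ≥0 => tvDist (P t x) μ) atTop (nhds 0) := by
    intro μ hμprob hμ x
    haveI := hμprob
    have hinv : ∀ t : ℝ≥0, μ.bind (P t) = μ := fun t => DoobAux.inv_bind hμ t
    have h := DoobAux.dTV_tendsto P hP hsem hreg hinv x
    have h2 : Tendsto (fun t : ℝ≥0 => 2 * DoobAux.dTV (P t x) μ) atTop (nhds (2 * 0)) :=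
      ENNReal.Tendsto.const_mul h (Or.inr ENNReal.ofNat_ne_top)
    rw [mul_zero] at h2
    exact h2
  refine ⟨?_, hconv⟩
  intro μ₁ μ₂ h1 h2 hinv1 hinv2
  haveI := h1
  haveI := h2
  have hE : Nonempty E := by
    by_contra h
    rw [not_nonempty_iff] at h
    have hμu := measure_univ (μ := μ₁)
    rw [show (univ : Set E) = ∅ from eq_empty_of_isEmpty _, measure_empty] at hμu
    exact zero_ne_one hμu
  obtain ⟨x⟩ := hE
  have hc1 := hconv μ₁ h1 hinv1 x
  have hc2 := hconv μ₂ h2 hinv2 x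
  have hdle : ∀ (ν : Measure E) (t : ℝ≥0), DoobAux.dTV (P t x) ν ≤ tvDist (P t x) ν := by
    intro ν t
    exact le_mul_of_one_le_left zero_le one_le_two
  have hzero : DoobAux.dTV μ₁ μ₂ = 0 := by
    refine le_antisymm (ENNReal.le_of_forall_pos_le_add fun ε hε _ => ?_) zero_le
    rw [zero_add]
    have hε' : (0:ℝ≥0∞) < (ε : ℝ≥0∞) / 2 :=
      ENNReal.div_pos (by exact_mod_cast hε.ne') ENNReal.ofNat_ne_top
    have e1 := (ENNReal.tendsto_nhds_zero.mp hc1) ((ε:ℝ≥0∞)/2) hε'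
    have e2 := (ENNReal.tendsto_nhds_zero.mp hc2) ((ε:ℝ≥0∞)/2) hε'
    obtain ⟨t, ht1, ht2⟩ := (e1.and e2).exists
    have hd1 : DoobAux.dTV (P t x) μ₁ ≤ (ε:ℝ≥0∞)/2 := (hdle μ₁ t).trans ht1
    have hd2 : DoobAux.dTV (P t x) μ₂ ≤ (ε:ℝ≥0∞)/2 := (hdle μ₂ t).trans ht2
    calc DoobAux.dTV μ₁ μ₂
        ≤ DoobAux.dTV μ₁ (P t x) + DoobAux.dTV (P t x) μ₂ := DoobAux.dTV_triangle _ _ _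
      _ = DoobAux.dTV (P t x) μ₁ + DoobAux.dTV (P t x) μ₂ := by rw [DoobAux.dTV_symm]
      _ ≤ (ε:ℝ≥0∞)/2 + (ε:ℝ≥0∞)/2 := add_le_add hd1 hd2
      _ = (ε:ℝ≥0∞) := ENNReal.add_halves _
  exact DoobAux.eq_of_dTV_eq_zero hzero
end

section
/- Let P be a Markov kernel on a measurable space (E, 𝓔) with n-step kernels P_n. Suppose μ₁ and μ₂ are invariant probability measures such that, for i = 1, 2 and μᵢ-almost all x, ‖P_n(x,·) − μᵢ‖ → 0 as n → ∞, and suppose μ₁ ≪ μ₂ (μ₁ is absolutely continuous with respect to μ₂). Then μ₁ = μ₂. -/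
open MeasureTheory ProbabilityTheory Filter ENNReal

/-- The `n`-step transition kernel `P_n` of a Markov kernel `P`. -/
noncomputable def nStep {E : Type*} [MeasurableSpace E] (P : ProbabilityTheory.Kernel E E) :
    ℕ → ProbabilityTheory.Kernel E E
  | 0 => ProbabilityTheory.Kernel.id
  | n + 1 => (nStep P n) ∘ₖ P

lemma term_le_tvDist {E : Type*} [MeasurableSpace E] (μ ν : Measure E)
    {A : Set E} (hA : MeasurableSet A) :
    ((μ A - ν A) ⊔ (ν A - μ A)) ≤ tvDist μ ν := by
  refine le_trans ?_ (le_mul_of_one_le_left zero_le one_le_two)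
  exact le_iSup₂ (f := fun (A : Set E) (_ : MeasurableSet A) => ((μ A - ν A) ⊔ (ν A - μ A))) A hA

/-- If `μ₁, μ₂` are invariant probability measures such that `‖P_n(x,·) - μᵢ‖ → 0` for
`μᵢ`-a.a. `x` (`i = 1, 2`), and `μ₁ ≪ μ₂`, then `μ₁ = μ₂`. -/
theorem invariant_eq_of_absolutelyContinuous
    {E : Type*} [MeasurableSpace E]
    (P : ProbabilityTheory.Kernel E E) [IsMarkovKernel P]
    (μ₁ μ₂ : Measure E) [IsProbabilityMeasure μ₁] [IsProbabilityMeasure μ₂]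
    (hinv₁ : ∀ A : Set E, MeasurableSet A → μ₁ A = ∫⁻ x, P x A ∂μ₁)
    (hinv₂ : ∀ A : Set E, MeasurableSet A → μ₂ A = ∫⁻ x, P x A ∂μ₂)
    (hconv₁ : ∀ᵐ x ∂μ₁, Tendsto (fun n => tvDist (nStep P n x) μ₁) atTop (nhds 0))
    (hconv₂ : ∀ᵐ x ∂μ₂, Tendsto (fun n => tvDist (nStep P n x) μ₂) atTop (nhds 0))
    (hac : μ₁ ≪ μ₂) :
    μ₁ = μ₂ := by
  have hconv₂' : ∀ᵐ x ∂μ₁, Tendsto (fun n => tvDist (nStep P n x) μ₂) atTop (nhds 0) :=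
    hac.ae_le hconv₂
  have hboth := hconv₁.and hconv₂'
  obtain ⟨x, h1, h2⟩ := hboth.exists
  ext A hA
  set ν : ℕ → Measure E := fun n => nStep P n x with hν
  have key : ∀ (κ : Measure E), Tendsto (fun n => tvDist (ν n) κ) atTop (nhds 0) →
      μ₁ A ≤ κ A := by
    intro κ hκ
    have htend : Tendsto (fun n => κ A + tvDist (ν n) μ₁ + tvDist (ν n) κ) atTop
        (nhds (κ A + 0 + 0)) :=
      (Tendsto.add tendsto_const_nhds h1).add hκ
    have hle : ∀ n, μ₁ A ≤ κ A + tvDist (ν n) μ₁ + tvDist (ν n) κ := by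
      intro n
      have hb1 : μ₁ A - ν n A ≤ tvDist (ν n) μ₁ :=
        le_trans (le_max_right _ _) (term_le_tvDist (ν n) μ₁ hA)
      have hb2 : ν n A - κ A ≤ tvDist (ν n) κ :=
        le_trans (le_max_left _ _) (term_le_tvDist (ν n) κ hA)
      calc μ₁ A ≤ ν n A + tvDist (ν n) μ₁ := by
            rw [← tsub_le_iff_left]; exact hb1
        _ ≤ (κ A + tvDist (ν n) κ) + tvDist (ν n) μ₁ := by
            gcongr
            rw [← tsub_le_iff_left]; exact hb2
        _ = κ A + tvDist (ν n) μ₁ + tvDist (ν n) κ := by ring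
    simpa using ge_of_tendsto htend (Eventually.of_forall hle)
  have key' : ∀ (κ : Measure E), Tendsto (fun n => tvDist (ν n) κ) atTop (nhds 0) →
      κ A ≤ μ₁ A := by
    intro κ hκ
    have htend : Tendsto (fun n => μ₁ A + tvDist (ν n) μ₁ + tvDist (ν n) κ) atTop
        (nhds (μ₁ A + 0 + 0)) :=
      (Tendsto.add tendsto_const_nhds h1).add hκ
    have hle : ∀ n, κ A ≤ μ₁ A + tvDist (ν n) μ₁ + tvDist (ν n) κ := by
      intro n
      have hb1 : ν n A - μ₁ A ≤ tvDist (ν n) μ₁ :=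
        le_trans (le_max_left _ _) (term_le_tvDist (ν n) μ₁ hA)
      have hb2 : κ A - ν n A ≤ tvDist (ν n) κ :=
        le_trans (le_max_right _ _) (term_le_tvDist (ν n) κ hA)
      calc κ A ≤ ν n A + tvDist (ν n) κ := by
            rw [← tsub_le_iff_left]; exact hb2
        _ ≤ (μ₁ A + tvDist (ν n) μ₁) + tvDist (ν n) κ := by
            gcongr
            rw [← tsub_le_iff_left]; exact hb1
    simpa using ge_of_tendsto htend (Eventually.of_forall hle)
  exact le_antisymm (key μ₂ h2) (key' μ₂ h2)
end
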